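/- Let a > 0 and let Q be a nonnegative summable function on a countable set with Q_x > 0 for some x, and let ψ_x ∈ P(0,∞) with G_Q(λ) = Σ_x Q_x log ∫ e^{λs} ψ_x(ds) satisfying G_Q(ζ_Q) = ∞. If a = m_Q := Σ_x Q_x m_x (with m_x the essential infimum of ψ_x), then the Fenchel–Legendre transform G_Q*(a) = sup_λ {aλ − G_Q(λ)} equals −Σ_x Q_x log ψ_x({m_x}). -/

import Mathlib

open scoped Classical
open MeasureTheory Filter Topology
open scoped ENNReal

namespace Stmt17Aux

noncomputable def J (μ : Measure ℝ) (m l : ℝ) : ℝ≥0∞ :=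
  ∫⁻ s, ENNReal.ofReal (Real.exp (l * (s - m))) ∂μ

lemma meas (l m : ℝ) : Measurable fun s : ℝ => ENNReal.ofReal (Real.exp (l * (s - m))) := by
  fun_prop

lemma meas' (l : ℝ) : Measurable fun s : ℝ => ENNReal.ofReal (Real.exp (l * s)) := by
  fun_prop

lemma m_spec (μ : Measure ℝ) (hprob : IsProbabilityMeasure μ)
    (hsupp : μ (Set.Ioi 0)ᶜ = 0) {m : ℝ}
    (hm : m = sSup {c : ℝ | 0 ≤ c ∧ μ (Set.Ioo 0 c) = 0}) :
    0 ≤ m ∧ μ (Set.Iio m) = 0 := by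
  set S := {c : ℝ | 0 ≤ c ∧ μ (Set.Ioo 0 c) = 0} with hS
  have h0S : (0 : ℝ) ∈ S := ⟨le_refl 0, by simp⟩
  have hbdd : BddAbove S := by
    by_contra hb
    have hIoi : μ (Set.Ioi (0:ℝ)) = 0 := by
      have hc : ∀ n : ℕ, ∃ c ∈ S, (n : ℝ) < c := by
        intro n
        rcases not_bddAbove_iff.mp hb (n : ℝ) with ⟨c, hcS, hcn⟩
        exact ⟨c, hcS, hcn⟩
      choose c hcS hcn using hc
      have hsub : Set.Ioi (0:ℝ) ⊆ ⋃ n : ℕ, Set.Ioo 0 (c n) := by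
        intro y hy
        rcases exists_nat_gt y with ⟨n, hn⟩
        exact Set.mem_iUnion.2 ⟨n, hy, hn.trans (hcn n)⟩
      refine measure_mono_null hsub (measure_iUnion_null fun n => (hcS n).2)
    have : (1 : ℝ≥0∞) ≤ 0 := by
      calc (1 : ℝ≥0∞) = μ Set.univ := hprob.measure_univ.symm
        _ = μ (Set.Ioi 0 ∪ (Set.Ioi 0)ᶜ) := by rw [Set.union_compl_self]
        _ ≤ μ (Set.Ioi 0) + μ (Set.Ioi 0)ᶜ := measure_union_le _ _
        _ = 0 := by rw [hIoi, hsupp, add_zero]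
    exact absurd this (by simp)
  have hm0 : 0 ≤ m := hm ▸ le_csSup hbdd h0S
  refine ⟨hm0, ?_⟩
  have hIoo : μ (Set.Ioo 0 m) = 0 := by
    have hc : ∀ n : ℕ, ∃ c ∈ S, m - 1 / ((n : ℝ) + 1) < c := by
      intro n
      refine exists_lt_of_lt_csSup ⟨0, h0S⟩ ?_
      rw [← hm]
      have : 0 < 1 / ((n : ℝ) + 1) := by positivity
      linarith
    choose c hcS hcn using hc
    have hsub : Set.Ioo 0 m ⊆ ⋃ n : ℕ, Set.Ioo 0 (c n) := by
      intro y hy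
      rcases exists_nat_one_div_lt (show (0:ℝ) < m - y by linarith [hy.2]) with ⟨n, hn⟩
      refine Set.mem_iUnion.2 ⟨n, hy.1, ?_⟩
      have := hcn n
      linarith
    exact measure_mono_null hsub (measure_iUnion_null fun n => (hcS n).2)
  have hsub2 : Set.Iio m ⊆ (Set.Ioi 0)ᶜ ∪ Set.Ioo 0 m := by
    intro y hy
    by_cases hy0 : 0 < y
    · exact Or.inr ⟨hy0, hy⟩
    · exact Or.inl (by simpa using hy0)
  exact measure_mono_null hsub2 (measure_union_null hsupp hIoo)

variable {μ : Measure ℝ} {m : ℝ}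

lemma ae_ge (hIio : μ (Set.Iio m) = 0) : ∀ᵐ s ∂μ, m ≤ s := by
  have h : {s : ℝ | ¬ m ≤ s} = Set.Iio m := by ext s; simp [not_le]
  rw [ae_iff, h]; exact hIio

lemma J_pos (hprob : IsProbabilityMeasure μ) (l : ℝ) : 0 < J μ m l := by
  rw [J, lintegral_pos_iff_support (meas l m)]
  have h : (Function.support fun s : ℝ => ENNReal.ofReal (Real.exp (l * (s - m)))) =
      Set.univ := by
    ext s
    simp only [Function.mem_support, Set.mem_univ, iff_true, ne_eq, ENNReal.ofReal_eq_zero,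
      not_le]
    exact Real.exp_pos _
  rw [h, hprob.measure_univ]; exact zero_lt_one

lemma J_le_one (hprob : IsProbabilityMeasure μ) (hIio : μ (Set.Iio m) = 0)
    {l : ℝ} (hl : l ≤ 0) : J μ m l ≤ 1 := by
  rw [J]
  calc ∫⁻ s, ENNReal.ofReal (Real.exp (l * (s - m))) ∂μ ≤ ∫⁻ _, 1 ∂μ := by
        refine lintegral_mono_ae ((ae_ge hIio).mono fun s hs => ?_)
        have h1 : l * (s - m) ≤ 0 := mul_nonpos_of_nonpos_of_nonneg hl (by linarith)
        calc ENNReal.ofReal (Real.exp (l * (s - m))) ≤ ENNReal.ofReal 1 :=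
              ENNReal.ofReal_le_ofReal (by simpa using Real.exp_le_one_iff.mpr h1)
          _ = 1 := ENNReal.ofReal_one
    _ = 1 := by simp [hprob.measure_univ]

lemma J_ne_top (hprob : IsProbabilityMeasure μ) (hIio : μ (Set.Iio m) = 0)
    {l : ℝ} (hl : l ≤ 0) : J μ m l ≠ ⊤ :=
  ne_top_of_le_ne_top ENNReal.one_ne_top (J_le_one hprob hIio hl)

lemma J_mono (hIio : μ (Set.Iio m) = 0) {l l' : ℝ} (h : l ≤ l') :
    J μ m l ≤ J μ m l' := by
  refine lintegral_mono_ae ((ae_ge hIio).mono fun s hs => ?_)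
  exact ENNReal.ofReal_le_ofReal (Real.exp_le_exp.mpr
    (mul_le_mul_of_nonneg_right h (by linarith)))

lemma J_ge (l : ℝ) : μ {m} ≤ J μ m l := by
  rw [J]
  calc μ {m} = ENNReal.ofReal (Real.exp (l * (m - m))) * μ {m} := by simp
    _ = ∫⁻ s in {m}, ENNReal.ofReal (Real.exp (l * (s - m))) ∂μ := by
        rw [lintegral_singleton]
    _ ≤ ∫⁻ s, ENNReal.ofReal (Real.exp (l * (s - m))) ∂μ :=
        setLIntegral_le_lintegral _ _

lemma Θ_eq (μ : Measure ℝ) (m l : ℝ) :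
    ∫⁻ s, ENNReal.ofReal (Real.exp (l * s)) ∂μ
      = ENNReal.ofReal (Real.exp (l * m)) * J μ m l := by
  rw [J, ← lintegral_const_mul _ (meas l m)]
  refine lintegral_congr fun s => ?_
  rw [← ENNReal.ofReal_mul (Real.exp_nonneg _), ← Real.exp_add]
  ring_nf

lemma J_tendsto (hprob : IsProbabilityMeasure μ) (hIio : μ (Set.Iio m) = 0) :
    Tendsto (fun n : ℕ => J μ m (-(n : ℝ))) atTop (𝓝 (μ {m})) := by
  have hlim : ∫⁻ s, Set.indicator {m} (fun _ => (1 : ℝ≥0∞)) s ∂μ = μ {m} := by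
    rw [lintegral_indicator (measurableSet_singleton m)]
    simp
  rw [← hlim]
  refine tendsto_lintegral_of_dominated_convergence (fun _ => 1)
    (fun n => meas _ _) (fun n => ?_) (by simp [hprob.measure_univ]) ?_
  · refine (ae_ge hIio).mono fun s hs => ?_
    have h1 : -(n:ℝ) * (s - m) ≤ 0 :=
      mul_nonpos_of_nonpos_of_nonneg (by simp) (by linarith)
    calc ENNReal.ofReal (Real.exp (-(n:ℝ) * (s - m))) ≤ ENNReal.ofReal 1 :=
          ENNReal.ofReal_le_ofReal (by simpa using Real.exp_le_one_iff.mpr h1)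
      _ = 1 := ENNReal.ofReal_one
  · refine (ae_ge hIio).mono fun s hs => ?_
    rcases eq_or_lt_of_le hs with heq | hlt
    · subst heq
      simp only [sub_self, mul_zero, Real.exp_zero, ENNReal.ofReal_one]
      rw [Set.indicator_of_mem (Set.mem_singleton m)]
      exact tendsto_const_nhds
    · have hne : s ∉ ({m} : Set ℝ) := by simp [ne_of_gt hlt]
      rw [Set.indicator_of_notMem hne]
      have h1 : Tendsto (fun n : ℕ => -(n:ℝ) * (s - m)) atTop atBot := by
        have h2 : Tendsto (fun n : ℕ => (n:ℝ) * (s - m)) atTop atTop :=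
          (tendsto_natCast_atTop_atTop).atTop_mul_const (by linarith)
        have h3 := tendsto_neg_atTop_atBot.comp h2
        simpa [Function.comp_def, neg_mul] using h3
      have h4 := Real.tendsto_exp_atBot.comp h1
      have h5 := (ENNReal.continuous_ofReal.tendsto 0).comp h4
      simpa [Function.comp_def] using h5

lemma term_mono (hprob : IsProbabilityMeasure μ) (hIio : μ (Set.Iio m) = 0)
    {q : ℝ} (hq : 0 ≤ q) :
    Monotone fun n : ℕ => ENNReal.ofReal (q * (-Real.log (J μ m (-(n : ℝ))).toReal)) := by
  intro n n' hnn'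
  refine ENNReal.ofReal_le_ofReal (mul_le_mul_of_nonneg_left (neg_le_neg ?_) hq)
  refine Real.log_le_log ?_ ?_
  · exact ENNReal.toReal_pos (J_pos hprob _).ne' (J_ne_top hprob hIio (by simp))
  · exact ENNReal.toReal_mono (J_ne_top hprob hIio (by simp))
      (J_mono hIio (by simp [neg_le_neg_iff, Nat.cast_le, hnn']))

lemma sup_term (hprob : IsProbabilityMeasure μ) (hIio : μ (Set.Iio m) = 0)
    {q : ℝ} (hq : 0 ≤ q) :
    (⨆ n : ℕ, ENNReal.ofReal (q * (-Real.log (J μ m (-(n : ℝ))).toReal)))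
      = if μ {m} = 0 ∧ q ≠ 0 then ⊤
        else ENNReal.ofReal (q * (-Real.log (μ {m}).toReal)) := by
  have hmono := term_mono hprob hIio hq
  rcases eq_or_ne q 0 with hq0 | hq0
  · simp [hq0]
  have hqpos : 0 < q := lt_of_le_of_ne hq (Ne.symm hq0)
  by_cases hμ0 : μ {m} = 0
  · rw [if_pos ⟨hμ0, hq0⟩]
    refine iSup_eq_of_tendsto hmono ?_
    have h1 : Tendsto (fun n : ℕ => (J μ m (-(n : ℝ))).toReal) atTop (𝓝[>] 0) := by
      refine tendsto_nhdsWithin_of_tendsto_nhds_of_eventually_within _ ?_ ?_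
      · have := (ENNReal.tendsto_toReal (measure_ne_top μ {m})).comp
          (J_tendsto hprob hIio)
        simpa [hμ0, Function.comp_def] using this
      · filter_upwards with n
        exact ENNReal.toReal_pos (J_pos hprob _).ne' (J_ne_top hprob hIio (by simp))
    have h2 := Real.tendsto_log_nhdsGT_zero.comp h1
    have h3 : Tendsto (fun n : ℕ => q * (-Real.log (J μ m (-(n : ℝ))).toReal))
        atTop atTop := by
      refine Tendsto.const_mul_atTop hqpos ?_
      exact tendsto_neg_atBot_atTop.comp h2
    exact ENNReal.tendsto_ofReal_atTop.comp h3
  · rw [if_neg (by tauto)]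
    refine iSup_eq_of_tendsto hmono ?_
    have h1 : Tendsto (fun n : ℕ => (J μ m (-(n : ℝ))).toReal) atTop
        (𝓝 (μ {m}).toReal) :=
      (ENNReal.tendsto_toReal (measure_ne_top μ {m})).comp (J_tendsto hprob hIio)
    have hpos : (0:ℝ) < (μ {m}).toReal := ENNReal.toReal_pos hμ0 (measure_ne_top μ _)
    have h2 : Tendsto (fun n : ℕ => Real.log (J μ m (-(n : ℝ))).toReal) atTop
        (𝓝 (Real.log (μ {m}).toReal)) :=
      ((Real.continuousAt_log hpos.ne').tendsto).comp h1
    exact (ENNReal.continuous_ofReal.tendsto _).comp ((h2.neg).const_mul q)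

lemma tsum_iSup_comm {V : Type*} [Countable V] (f : V → ℕ → ℝ≥0∞)
    (hf : ∀ x, Monotone (f x)) : ∑' x, ⨆ n, f x n = ⨆ n, ∑' x, f x n := by
  letI : MeasurableSpace V := ⊤
  haveI : MeasurableSingletonClass V := ⟨fun _ => trivial⟩
  calc ∑' x, ⨆ n, f x n = ∫⁻ x, ⨆ n, f x n ∂Measure.count := (lintegral_count _).symm
    _ = ⨆ n, ∫⁻ x, f x n ∂Measure.count :=
        lintegral_iSup (fun n => fun s _ => trivial) (fun n n' h x => hf x h)
    _ = ⨆ n, ∑' x, f x n := by simp [lintegral_count]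

lemma coe_ennreal_iSup {f : ℕ → ℝ≥0∞} (hf : Monotone f) :
    ((⨆ n, f n : ℝ≥0∞) : EReal) = ⨆ n, ((f n : ℝ≥0∞) : EReal) := by
  have hmono : Monotone fun n => ((f n : ℝ≥0∞) : EReal) := fun a b h =>
    EReal.coe_ennreal_le_coe_ennreal_iff.mpr (hf h)
  exact (iSup_eq_of_tendsto hmono
    ((continuous_coe_ennreal_ereal.tendsto _).comp (tendsto_atTop_iSup hf))).symm

end Stmt17Aux

/-- Let `a > 0`, `Q ≥ 0` summable with some `Q_x > 0`, and
`ψ_x ∈ P(0,∞)` with `G_Q(λ) = Σ_x Q_x log ∫ e^{λ s} ψ_x(ds)` satisfying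
`G_Q(ζ_Q) = ∞`.  If `a = m_Q := Σ_x Q_x m_x` (with `m_x` the essential infimum of
`ψ_x`), then the Fenchel–Legendre transform `G_Q*(a) = sup_λ (aλ − G_Q(λ))` equals
`−Σ_x Q_x log ψ_x({m_x})`, a term being `+∞` when `Q_x > 0` and `ψ_x({m_x}) = 0`. -/
theorem stmt_17 {V : Type*} [Countable V]
    (ψx : V → Measure ℝ) (hprob : ∀ x, IsProbabilityMeasure (ψx x))
    (hψx : ∀ x, (ψx x) (Set.Ioi 0)ᶜ = 0)
    (Θx : V → ℝ → ℝ≥0∞)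
    (hΘx : ∀ x l, Θx x l = ∫⁻ s, ENNReal.ofReal (Real.exp (l * s)) ∂(ψx x))
    (Qx : V → ℝ) (hQnonneg : ∀ x, 0 ≤ Qx x) (hQsum : Summable Qx)
    (hVplus : ∃ x, 0 < Qx x)
    (GQ : ℝ → ℝ≥0∞)
    (hGQ : ∀ l : ℝ, GQ l = ∑' x : V,
      if Qx x ≠ 0 ∧ Θx x l = ⊤ then (⊤ : ℝ≥0∞)
      else ENNReal.ofReal (Qx x * Real.log ((Θx x l).toReal)))
    (GQr : ℝ → ℝ)
    (hGQr : ∀ l : ℝ, GQr l = ∑' x : V, Qx x * Real.log ((Θx x l).toReal))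
    (hGQrsum : ∀ l : ℝ, (∀ x, Θx x l ≠ ⊤) →
      Summable fun x => Qx x * Real.log ((Θx x l).toReal))
    (ζQ : EReal)
    (hζQ : ζQ = sSup {l : EReal | ∃ r : ℝ, l = (r : EReal) ∧ 0 ≤ r ∧ GQ r ≠ ⊤})
    (hblow : (⨆ (l : ℝ) (_ : (l : EReal) ≤ ζQ), GQ l) = ⊤)
    (Gstar : ℝ → EReal)
    (hGstar : ∀ a : ℝ, Gstar a = ⨆ l : ℝ,
      if ∀ x, Θx x l ≠ ⊤ then (((a * l - GQr l : ℝ)) : EReal) else (⊥ : EReal))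
    (mx : V → ℝ)
    (hmx : ∀ x, mx x = sSup {c : ℝ | 0 ≤ c ∧ (ψx x) (Set.Ioo 0 c) = 0})
    (hmQsum : Summable fun x => Qx x * mx x)
    (a : ℝ) (ha : 0 < a) (haeq : a = ∑' x, Qx x * mx x) :
    Gstar a = ((∑' x : V,
      if (ψx x) {mx x} = 0 ∧ Qx x ≠ 0 then (⊤ : ℝ≥0∞)
      else ENNReal.ofReal (Qx x * (-Real.log (((ψx x) {mx x}).toReal))) : ℝ≥0∞) :
        EReal) := by
  classical
  have hms : ∀ x, 0 ≤ mx x ∧ (ψx x) (Set.Iio (mx x)) = 0 := fun x =>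
    Stmt17Aux.m_spec (ψx x) (hprob x) (hψx x) (hmx x)
  set Jf : V → ℝ → ℝ≥0∞ := fun x l => Stmt17Aux.J (ψx x) (mx x) l with hJf
  have hΘJ : ∀ x l, Θx x l = ENNReal.ofReal (Real.exp (l * mx x)) * Jf x l := fun x l => by
    rw [hΘx x l, Stmt17Aux.Θ_eq (ψx x) (mx x) l]
  have hJle1 : ∀ x (l : ℝ), l ≤ 0 → Jf x l ≤ 1 := fun x l hl =>
    Stmt17Aux.J_le_one (hprob x) (hms x).2 hl
  have hJnetop : ∀ x (l : ℝ), l ≤ 0 → Jf x l ≠ ⊤ := fun x l hl =>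
    Stmt17Aux.J_ne_top (hprob x) (hms x).2 hl
  have hJpos : ∀ x (l : ℝ), 0 < Jf x l := fun x l => Stmt17Aux.J_pos (hprob x) l
  have hΘfin : ∀ (l : ℝ), l ≤ 0 → ∀ x, Θx x l ≠ ⊤ := by
    intro l hl x
    rw [hΘJ]
    exact ENNReal.mul_ne_top ENNReal.ofReal_ne_top (hJnetop x l hl)
  have hlog : ∀ (l : ℝ), l ≤ 0 → ∀ x,
      Real.log ((Θx x l).toReal) = l * mx x + Real.log ((Jf x l).toReal) := by
    intro l hl x
    have hJr : ((Jf x l).toReal) ≠ 0 :=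
      (ENNReal.toReal_pos (hJpos x l).ne' (hJnetop x l hl)).ne'
    rw [hΘJ, ENNReal.toReal_mul, ENNReal.toReal_ofReal (Real.exp_nonneg _),
      Real.log_mul (Real.exp_ne_zero _) hJr, Real.log_exp]
  have hgsum : ∀ (l : ℝ), l ≤ 0 → Summable fun x => Qx x * Real.log ((Θx x l).toReal) :=
    fun l hl => hGQrsum l (hΘfin l hl)
  have hhsum : ∀ (l : ℝ), l ≤ 0 →
      Summable fun x => Qx x * (-Real.log ((Jf x l).toReal)) := by
    intro l hl
    have h1 := (((hgsum l hl).sub (hmQsum.mul_right l))).neg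
    refine h1.congr fun x => ?_
    rw [hlog l hl x]; ring
  have hkey : ∀ (l : ℝ), l ≤ 0 →
      a * l - GQr l = ∑' x, Qx x * (-Real.log ((Jf x l).toReal)) := by
    intro l hl
    rw [hGQr, haeq, ← tsum_mul_right,
      ← Summable.tsum_sub (hmQsum.mul_right l) (hgsum l hl)]
    exact tsum_congr fun x => by rw [hlog l hl x]; ring
  have hnonneg : ∀ (l : ℝ), l ≤ 0 → ∀ x, 0 ≤ Qx x * (-Real.log ((Jf x l).toReal)) := by
    intro l hl x
    refine mul_nonneg (hQnonneg x)
      (neg_nonneg.mpr (Real.log_nonpos ENNReal.toReal_nonneg ?_))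
    have h1 := ENNReal.toReal_mono ENNReal.one_ne_top (hJle1 x l hl)
    simpa using h1
  set Sn : ℕ → ℝ≥0∞ := fun n =>
    ∑' x, ENNReal.ofReal (Qx x * (-Real.log ((Jf x (-(n:ℝ))).toReal))) with hSn
  have hSn_eq : ∀ n : ℕ,
      ((a * (-(n:ℝ)) - GQr (-(n:ℝ)) : ℝ) : EReal) = ((Sn n : ℝ≥0∞) : EReal) := by
    intro n
    have hl : (-(n:ℝ)) ≤ 0 := by simp
    rw [hkey _ hl]
    have h2 : Sn n = ENNReal.ofReal (∑' x, Qx x * (-Real.log ((Jf x (-(n:ℝ))).toReal))) := by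
      simp only [hSn]
      rw [← ENNReal.ofReal_tsum_of_nonneg (hnonneg _ hl) (hhsum _ hl)]
    rw [h2, EReal.coe_ennreal_ofReal, max_eq_left (tsum_nonneg (hnonneg _ hl))]
  have hSn_mono : Monotone Sn := by
    intro n n' h
    exact ENNReal.tsum_le_tsum fun x =>
      Stmt17Aux.term_mono (hprob x) ((hms x).2) (hQnonneg x) h
  set T : ℝ≥0∞ := ∑' x : V,
      if (ψx x) {mx x} = 0 ∧ Qx x ≠ 0 then (⊤ : ℝ≥0∞)
      else ENNReal.ofReal (Qx x * (-Real.log (((ψx x) {mx x}).toReal))) with hTdef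
  have hT : T = ⨆ n, Sn n := by
    rw [hTdef]
    have h1 : ∀ x : V, (if (ψx x) {mx x} = 0 ∧ Qx x ≠ 0 then (⊤ : ℝ≥0∞)
        else ENNReal.ofReal (Qx x * (-Real.log (((ψx x) {mx x}).toReal))))
        = ⨆ n : ℕ, ENNReal.ofReal (Qx x * (-Real.log ((Jf x (-(n:ℝ))).toReal))) :=
      fun x => (Stmt17Aux.sup_term (hprob x) (hms x).2 (hQnonneg x)).symm
    rw [tsum_congr h1]
    exact Stmt17Aux.tsum_iSup_comm _ fun x =>
      Stmt17Aux.term_mono (hprob x) (hms x).2 (hQnonneg x)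
  rw [hGstar]
  refine le_antisymm (iSup_le fun l => ?_) ?_
  · by_cases hfin : ∀ x, Θx x l ≠ ⊤
    · rw [if_pos hfin]
      by_cases hTtop : T = ⊤
      · rw [hTtop, EReal.coe_ennreal_top]
        exact le_top
      · have hcond : ∀ x, ¬((ψx x) {mx x} = 0 ∧ Qx x ≠ 0) := by
          intro x hx
          apply hTtop
          refine top_le_iff.mp ?_
          calc (⊤:ℝ≥0∞) = (if (ψx x) {mx x} = 0 ∧ Qx x ≠ 0 then (⊤:ℝ≥0∞)
              else ENNReal.ofReal (Qx x * (-Real.log (((ψx x) {mx x}).toReal)))) := by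
                rw [if_pos hx]
            _ ≤ T := by rw [hTdef]; exact ENNReal.le_tsum x
        set ρ : V → ℝ := fun x => Qx x * (-Real.log (((ψx x) {mx x}).toReal)) with hρ
        have hρnn : ∀ x, 0 ≤ ρ x := by
          intro x
          refine mul_nonneg (hQnonneg x)
            (neg_nonneg.mpr (Real.log_nonpos ENNReal.toReal_nonneg ?_))
          have h1 : (ψx x) {mx x} ≤ 1 := prob_le_one
          have h2 := ENNReal.toReal_mono ENNReal.one_ne_top h1
          simpa using h2
        have hTval : T = ∑' x, ENNReal.ofReal (ρ x) := by
          rw [hTdef]; exact tsum_congr fun x => by rw [if_neg (hcond x)]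
        have hρs : Summable ρ := by
          have h2 : (∑' x, ENNReal.ofReal (ρ x)) ≠ ⊤ := by rw [← hTval]; exact hTtop
          refine (ENNReal.summable_toReal h2).congr fun x => ?_
          rw [ENNReal.toReal_ofReal (hρnn x)]
        have hTr : (T : EReal) = ((∑' x, ρ x : ℝ) : EReal) := by
          rw [hTval, ← ENNReal.ofReal_tsum_of_nonneg hρnn hρs,
            EReal.coe_ennreal_ofReal, max_eq_left (tsum_nonneg hρnn)]
        rw [hTr, EReal.coe_le_coe_iff]
        have hterm : ∀ x, Qx x * mx x * l
            ≤ Qx x * Real.log ((Θx x l).toReal) + ρ x := by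
          intro x
          rcases eq_or_ne (Qx x) 0 with hq0 | hq0
          · simp [hρ, hq0]
          · have hψ0 : (ψx x) {mx x} ≠ 0 := fun h0 => hcond x ⟨h0, hq0⟩
            have hp : (0:ℝ) < (((ψx x) {mx x}).toReal) :=
              ENNReal.toReal_pos hψ0 (measure_ne_top _ _)
            have hΘge : ENNReal.ofReal (Real.exp (l * mx x)) * (ψx x) {mx x}
                ≤ Θx x l := by
              rw [hΘJ]
              exact mul_le_mul_right (Stmt17Aux.J_ge l) _
            have h3 : Real.exp (l * mx x) * (((ψx x) {mx x}).toReal)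
                ≤ (Θx x l).toReal := by
              have h4 := ENNReal.toReal_mono (hfin x) hΘge
              rwa [ENNReal.toReal_mul, ENNReal.toReal_ofReal (Real.exp_nonneg _)] at h4
            have h4 : l * mx x + Real.log (((ψx x) {mx x}).toReal)
                ≤ Real.log ((Θx x l).toReal) := by
              have h5 := Real.log_le_log (by positivity) h3
              rwa [Real.log_mul (Real.exp_ne_zero _) hp.ne', Real.log_exp] at h5
            have h6 := mul_le_mul_of_nonneg_left h4 (hQnonneg x)
            rw [mul_add] at h6
            have h7 : ρ x = -(Qx x * Real.log (((ψx x) {mx x}).toReal)) := by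
              rw [hρ]; ring
            have h8 : Qx x * mx x * l = Qx x * (l * mx x) := by ring
            linarith
        calc a * l - GQr l
            = (∑' x, Qx x * mx x) * l - ∑' x, Qx x * Real.log ((Θx x l).toReal) := by
              rw [haeq, hGQr]
          _ = (∑' x, (Qx x * mx x * l)) - ∑' x, Qx x * Real.log ((Θx x l).toReal) := by
              rw [tsum_mul_right]
          _ ≤ (∑' x, (Qx x * Real.log ((Θx x l).toReal) + ρ x))
              - ∑' x, Qx x * Real.log ((Θx x l).toReal) := by
              have hle := Summable.tsum_le_tsum hterm (hmQsum.mul_right l)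
                ((hGQrsum l hfin).add hρs)
              linarith
          _ = ∑' x, ρ x := by
              rw [Summable.tsum_add (hGQrsum l hfin) hρs]; ring
    · rw [if_neg hfin]; exact bot_le
  · rw [hT, Stmt17Aux.coe_ennreal_iSup hSn_mono]
    refine iSup_le fun n => ?_
    refine le_iSup_of_le (-(n:ℝ)) ?_
    rw [if_pos (hΘfin _ (by simp))]
    exact le_of_eq (hSn_eq n).symm
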